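/- arXiv:0709.2512 — 3 statements merged into one kernel-verified Lean document; each statement's English description precedes it below -/
import Mathlib

section
/- Stability of subgroup filtrations: if for every class h the two size functions satisfy |S¹(h) − S²(h)| ≤ ε, and X¹, X² are the subgroup filtrations from optimal bases under S¹ and S², then dist(X¹, X²) ≤ ε. -/
/-- The subgroup filtration associated to an ordered basis: `ψₙ = span(h₁,…,hₙ)`. -/
noncomputable def psiFilt {H : Type*} [AddCommGroup H] [Module (ZMod 2) H]
    {β : ℕ} (b : Module.Basis (Fin β) (ZMod 2) H) (n : ℕ) : Submodule (ZMod 2) H :=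
  Submodule.span (ZMod 2) (b '' {j : Fin β | (j : ℕ) < n})

lemma filtration_stability_key {H : Type*} [AddCommGroup H] [Module (ZMod 2) H] {β : ℕ}
    (S₁ S₂ : H → ℝ) (ε : ℝ)
    (hpt : ∀ h : H, |S₁ h - S₂ h| ≤ ε)
    (b₁ b₂ : Module.Basis (Fin β) (ZMod 2) H)
    (hsort₁ : Monotone fun i => S₁ (b₁ i))
    (hsort₂ : Monotone fun i => S₂ (b₂ i))
    (hfact1₁ : ∀ j : Fin β,
      b₁ j ∉ Submodule.span (ZMod 2) {h : H | h ≠ 0 ∧ S₁ h < S₁ (b₁ j)})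
    (hfact2₂ : ∀ t : ℝ, {h : H | h ≠ 0 ∧ S₂ h ≤ t} ⊆
      ↑(Submodule.span (ZMod 2) (b₂ '' {i : Fin β | S₂ (b₂ i) ≤ t})))
    (i j : Fin β)
    (hj : (j : ℕ) + 1 = sInf {n : ℕ | psiFilt b₁ ((i : ℕ) + 1) ≤ psiFilt b₂ n}) :
    |S₁ (b₁ i) - S₂ (b₂ j)| ≤ ε := by
  have hTne : {n : ℕ | psiFilt b₁ ((i : ℕ) + 1) ≤ psiFilt b₂ n}.Nonempty := by
    refine ⟨β, ?_⟩
    have htop : psiFilt b₂ β = ⊤ := by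
      unfold psiFilt
      have himg : (b₂ '' {k : Fin β | (k : ℕ) < β}) = Set.range b₂ := by
        ext x; simp [Fin.isLt]
      rw [himg, b₂.span_eq]
    simp [Set.mem_setOf_eq, htop]
  have hmem : psiFilt b₁ ((i : ℕ) + 1) ≤ psiFilt b₂ ((j : ℕ) + 1) := by
    have h := Nat.sInf_mem hTne
    rw [← hj] at h
    exact h
  have hB : S₁ (b₁ i) - S₂ (b₂ j) ≤ ε := by
    by_contra hc
    push_neg at hc
    apply hfact1₁ i
    have h1 : b₁ i ∈ psiFilt b₁ ((i : ℕ) + 1) :=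
      Submodule.subset_span ⟨i, by simp, rfl⟩
    have h2 := hmem h1
    have h3 : psiFilt b₂ ((j : ℕ) + 1) ≤
        Submodule.span (ZMod 2) {h : H | h ≠ 0 ∧ S₁ h < S₁ (b₁ i)} := by
      apply Submodule.span_le.mpr
      rintro x ⟨k, hk, rfl⟩
      apply Submodule.subset_span
      have hk' : k ≤ j := Fin.le_def.mpr (Nat.lt_succ_iff.mp hk)
      refine ⟨b₂.ne_zero k, ?_⟩
      have e1 := (abs_sub_le_iff.mp (hpt (b₂ k))).1
      have e2 : S₂ (b₂ k) ≤ S₂ (b₂ j) := hsort₂ hk'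
      linarith
    exact h3 h2
  have hA : S₂ (b₂ j) - S₁ (b₁ i) ≤ ε := by
    set t := S₁ (b₁ i) + ε with ht
    set F := Finset.univ.filter (fun k : Fin β => S₂ (b₂ k) ≤ t) with hF
    have hFne : F.Nonempty := by
      by_contra hc
      have hempty : {k : Fin β | S₂ (b₂ k) ≤ t} = ∅ := by
        ext k
        simp only [Set.mem_setOf_eq, Set.mem_empty_iff_false, iff_false]
        intro hk
        exact hc ⟨k, by simp [hF, hk]⟩
      have hmembi : b₁ i ∈ Submodule.span (ZMod 2)
          (b₂ '' {k : Fin β | S₂ (b₂ k) ≤ t}) := by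
        apply hfact2₂ t
        refine ⟨b₁.ne_zero i, ?_⟩
        have e := (abs_sub_le_iff.mp (hpt (b₁ i))).2
        simp only [ht]; linarith
      rw [hempty] at hmembi
      simp only [Set.image_empty, Submodule.span_empty, Submodule.mem_bot] at hmembi
      exact b₁.ne_zero i hmembi
    set j₀ := F.max' hFne with hj₀
    have hsub : psiFilt b₁ ((i : ℕ) + 1) ≤ psiFilt b₂ ((j₀ : ℕ) + 1) := by
      apply Submodule.span_le.mpr
      rintro x ⟨i', hi', rfl⟩
      have hi'le : i' ≤ i := Fin.le_def.mpr (Nat.lt_succ_iff.mp hi')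
      have hx : b₁ i' ∈ Submodule.span (ZMod 2)
          (b₂ '' {k : Fin β | S₂ (b₂ k) ≤ t}) := by
        apply hfact2₂ t
        refine ⟨b₁.ne_zero i', ?_⟩
        have e1 := (abs_sub_le_iff.mp (hpt (b₁ i'))).2
        have e2 : S₁ (b₁ i') ≤ S₁ (b₁ i) := hsort₁ hi'le
        simp only [ht]; linarith
      have hmono : Submodule.span (ZMod 2) (b₂ '' {k : Fin β | S₂ (b₂ k) ≤ t})
          ≤ psiFilt b₂ ((j₀ : ℕ) + 1) := by
        apply Submodule.span_mono
        apply Set.image_mono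
        intro k hk
        have hkF : k ∈ F := by
          simp only [hF, Finset.mem_filter, Finset.mem_univ, true_and]
          exact hk
        have hkle := F.le_max' k hkF
        show (k : ℕ) < (j₀ : ℕ) + 1
        exact Nat.lt_succ_iff.mpr (Fin.le_def.mp hkle)
      exact hmono hx
    have hle : (j : ℕ) + 1 ≤ (j₀ : ℕ) + 1 := by
      rw [hj]; exact Nat.sInf_le hsub
    have hjle : j ≤ j₀ := Fin.le_def.mpr (Nat.succ_le_succ_iff.mp hle)
    have hmon : S₂ (b₂ j) ≤ S₂ (b₂ j₀) := hsort₂ hjle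
    have hj₀t : S₂ (b₂ j₀) ≤ t := by
      have hm : j₀ ∈ F := F.max'_mem hFne
      simp only [hF, Finset.mem_filter, Finset.mem_univ, true_and] at hm
      exact hm
    simp only [ht] at hj₀t
    linarith
  rw [abs_sub_le_iff]
  exact ⟨hB, hA⟩

/-- Stability of subgroup filtrations: if the two size functions are pointwise
within ε, and the two filtrations come from greedy-optimal sorted bases, then the
distance between the filtrations (max size difference between a subgroup and its
projection onto the other filtration) is at most ε. -/
theorem filtration_stability {H : Type*} [AddCommGroup H] [Module (ZMod 2) H] {β : ℕ}
    (S₁ S₂ : H → ℝ) (ε : ℝ)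
    (hpt : ∀ h : H, |S₁ h - S₂ h| ≤ ε)
    (b₁ b₂ : Module.Basis (Fin β) (ZMod 2) H)
    (hsort₁ : Monotone fun i => S₁ (b₁ i))
    (hsort₂ : Monotone fun i => S₂ (b₂ i))
    (hfact1₁ : ∀ j : Fin β,
      b₁ j ∉ Submodule.span (ZMod 2) {h : H | h ≠ 0 ∧ S₁ h < S₁ (b₁ j)})
    (hfact1₂ : ∀ j : Fin β,
      b₂ j ∉ Submodule.span (ZMod 2) {h : H | h ≠ 0 ∧ S₂ h < S₂ (b₂ j)})
    (hfact2₁ : ∀ t : ℝ, {h : H | h ≠ 0 ∧ S₁ h ≤ t} ⊆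
      ↑(Submodule.span (ZMod 2) (b₁ '' {i : Fin β | S₁ (b₁ i) ≤ t})))
    (hfact2₂ : ∀ t : ℝ, {h : H | h ≠ 0 ∧ S₂ h ≤ t} ⊆
      ↑(Submodule.span (ZMod 2) (b₂ '' {i : Fin β | S₂ (b₂ i) ≤ t}))) :
    (∀ i j : Fin β,
      (j : ℕ) + 1 = sInf {n : ℕ | psiFilt b₁ ((i : ℕ) + 1) ≤ psiFilt b₂ n} →
      |S₁ (b₁ i) - S₂ (b₂ j)| ≤ ε) ∧
    (∀ i j : Fin β,
      (j : ℕ) + 1 = sInf {n : ℕ | psiFilt b₂ ((i : ℕ) + 1) ≤ psiFilt b₁ n} →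
      |S₂ (b₂ i) - S₁ (b₁ j)| ≤ ε) := by
  have hpt' : ∀ h : H, |S₂ h - S₁ h| ≤ ε := fun h => (abs_sub_comm (S₁ h) (S₂ h)) ▸ hpt h
  exact ⟨fun i j hj => filtration_stability_key S₁ S₂ ε hpt b₁ b₂ hsort₁ hsort₂
      hfact1₁ hfact2₂ i j hj,
    fun i j hj => filtration_stability_key S₂ S₁ ε hpt' b₂ b₁ hsort₂ hsort₁
      hfact1₂ hfact2₁ i j hj⟩
end

section
/- Lower bound half of filtration stability: with the hypotheses of the subgroup-filtration stability theorem, if ψ²ⱼ = proj(ψ¹ᵢ, X²), then S²(ψ²ⱼ) ≥ S¹(ψ¹ᵢ) − ε. -/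
/-- Lower bound half of filtration stability: if `ψ²ⱼ` is the projection of
`ψ¹ᵢ` onto the second filtration, then `S²(ψ²ⱼ) ≥ S¹(ψ¹ᵢ) − ε`. -/
theorem filtration_stability_lower {H : Type*} [AddCommGroup H] [Module (ZMod 2) H] {β : ℕ}
    (S₁ S₂ : H → ℝ) (ε : ℝ)
    (hpt : ∀ h : H, |S₁ h - S₂ h| ≤ ε)
    (b₁ b₂ : Module.Basis (Fin β) (ZMod 2) H)
    (hsort₁ : Monotone fun i => S₁ (b₁ i))
    (hsort₂ : Monotone fun i => S₂ (b₂ i))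
    (hfact1₁ : ∀ j : Fin β,
      b₁ j ∉ Submodule.span (ZMod 2) {h : H | h ≠ 0 ∧ S₁ h < S₁ (b₁ j)})
    (hfact1₂ : ∀ j : Fin β,
      b₂ j ∉ Submodule.span (ZMod 2) {h : H | h ≠ 0 ∧ S₂ h < S₂ (b₂ j)})
    (hfact2₁ : ∀ t : ℝ, {h : H | h ≠ 0 ∧ S₁ h ≤ t} ⊆
      ↑(Submodule.span (ZMod 2) (b₁ '' {i : Fin β | S₁ (b₁ i) ≤ t})))
    (hfact2₂ : ∀ t : ℝ, {h : H | h ≠ 0 ∧ S₂ h ≤ t} ⊆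
      ↑(Submodule.span (ZMod 2) (b₂ '' {i : Fin β | S₂ (b₂ i) ≤ t}))) :
    ∀ i j : Fin β,
      (j : ℕ) + 1 = sInf {n : ℕ | psiFilt b₁ ((i : ℕ) + 1) ≤ psiFilt b₂ n} →
      S₁ (b₁ i) - ε ≤ S₂ (b₂ j) := by
  intro i j hj
  by_contra hlt
  push_neg at hlt
  have htop : psiFilt b₂ β = ⊤ := by
    unfold psiFilt
    have huniv : {m : Fin β | (m : ℕ) < β} = Set.univ := by
      ext m; simp [m.isLt]
    rw [huniv, Set.image_univ, b₂.span_eq]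
  have hne : (β : ℕ) ∈ {n : ℕ | psiFilt b₁ ((i : ℕ) + 1) ≤ psiFilt b₂ n} := by
    simp only [Set.mem_setOf_eq, htop]; exact le_top
  have hmem : psiFilt b₁ ((i : ℕ) + 1) ≤ psiFilt b₂ ((j : ℕ) + 1) := by
    have h := Nat.sInf_mem ⟨β, hne⟩
    rw [← hj] at h
    exact h
  have hb : b₁ i ∈ psiFilt b₁ ((i : ℕ) + 1) :=
    Submodule.subset_span ⟨i, by simp, rfl⟩
  have hb2 := hmem hb
  apply hfact1₁ i
  refine Submodule.span_mono ?_ hb2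
  rintro _ ⟨m, hm, rfl⟩
  refine ⟨b₂.ne_zero m, ?_⟩
  have hm' : m ≤ j := by
    have : (m : ℕ) ≤ (j : ℕ) := Nat.lt_succ_iff.mp hm
    exact Fin.le_def.mpr this
  have h1 : S₂ (b₂ m) ≤ S₂ (b₂ j) := hsort₂ hm'
  have h2 := abs_le.mp (hpt (b₂ m))
  linarith [h2.1, h2.2]
end

section
/- Upper bound half of filtration stability: with the hypotheses of the subgroup-filtration stability theorem, if ψ²ⱼ = proj(ψ¹ᵢ, X²), then S²(ψ²ⱼ) ≤ S¹(ψ¹ᵢ) + ε. -/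
/-- Upper bound half of filtration stability: if `ψ²ⱼ` is the projection of
`ψ¹ᵢ` onto the second filtration, then `S²(ψ²ⱼ) ≤ S¹(ψ¹ᵢ) + ε`. -/
theorem filtration_stability_upper {H : Type*} [AddCommGroup H] [Module (ZMod 2) H] {β : ℕ}
    (S₁ S₂ : H → ℝ) (ε : ℝ)
    (hpt : ∀ h : H, |S₁ h - S₂ h| ≤ ε)
    (b₁ b₂ : Module.Basis (Fin β) (ZMod 2) H)
    (hsort₁ : Monotone fun i => S₁ (b₁ i))
    (hsort₂ : Monotone fun i => S₂ (b₂ i))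
    (hfact1₁ : ∀ j : Fin β,
      b₁ j ∉ Submodule.span (ZMod 2) {h : H | h ≠ 0 ∧ S₁ h < S₁ (b₁ j)})
    (hfact1₂ : ∀ j : Fin β,
      b₂ j ∉ Submodule.span (ZMod 2) {h : H | h ≠ 0 ∧ S₂ h < S₂ (b₂ j)})
    (hfact2₁ : ∀ t : ℝ, {h : H | h ≠ 0 ∧ S₁ h ≤ t} ⊆
      ↑(Submodule.span (ZMod 2) (b₁ '' {i : Fin β | S₁ (b₁ i) ≤ t})))
    (hfact2₂ : ∀ t : ℝ, {h : H | h ≠ 0 ∧ S₂ h ≤ t} ⊆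
      ↑(Submodule.span (ZMod 2) (b₂ '' {i : Fin β | S₂ (b₂ i) ≤ t}))) :
    ∀ i j : Fin β,
      (j : ℕ) + 1 = sInf {n : ℕ | psiFilt b₁ ((i : ℕ) + 1) ≤ psiFilt b₂ n} →
      S₂ (b₂ j) ≤ S₁ (b₁ i) + ε := by
  intro i j hj
  set t : ℝ := S₁ (b₁ i) + ε with ht
  -- every b₁ l with l ≤ i satisfies S₂ (b₁ l) ≤ t
  have hS2 : ∀ l : Fin β, (l : ℕ) ≤ (i : ℕ) → S₂ (b₁ l) ≤ t := by
    intro l hl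
    have h1 : S₁ (b₁ l) ≤ S₁ (b₁ i) := hsort₁ (by exact_mod_cast hl)
    have h2 := abs_le.mp (hpt (b₁ l))
    linarith [h2.1]
  -- A : indices of b₂ with small S₂
  set A : Set (Fin β) := {m : Fin β | S₂ (b₂ m) ≤ t} with hA
  have hmem : ∀ l : Fin β, (l : ℕ) ≤ (i : ℕ) →
      b₁ l ∈ Submodule.span (ZMod 2) (b₂ '' A) := by
    intro l hl
    exact hfact2₂ t ⟨b₁.ne_zero l, hS2 l hl⟩
  -- A is nonempty
  have hAne : A.Nonempty := by
    by_contra hne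
    rw [Set.not_nonempty_iff_eq_empty] at hne
    have := hmem i le_rfl
    rw [hne, Set.image_empty, Submodule.span_empty, Submodule.mem_bot] at this
    exact b₁.ne_zero i this
  -- take k = max of A
  obtain ⟨k, hkA, hkmax⟩ := Set.Finite.exists_maximalFor id A (Set.toFinite A) hAne
  have hsub : A ⊆ {m : Fin β | (m : ℕ) < (k : ℕ) + 1} := by
    intro m hm
    simp only [Set.mem_setOf_eq, Nat.lt_succ_iff]
    by_contra hlt
    push_neg at hlt
    have hkm : k ≤ m := by
      rw [Fin.le_def]; omega
    have heq : id k = id m := le_antisymm hkm (hkmax hm hkm)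
    simp only [id] at heq
    rw [heq] at hlt
    omega
  -- k+1 is in the set whose inf is j+1
  have hkin : psiFilt b₁ ((i : ℕ) + 1) ≤ psiFilt b₂ ((k : ℕ) + 1) := by
    rw [psiFilt, Submodule.span_le]
    rintro _ ⟨l, hl, rfl⟩
    simp only [Set.mem_setOf_eq, Nat.lt_succ_iff] at hl
    exact Submodule.span_mono (Set.image_mono hsub) (hmem l hl)
  have hle : (j : ℕ) + 1 ≤ (k : ℕ) + 1 := hj ▸ Nat.sInf_le hkin
  have : S₂ (b₂ j) ≤ S₂ (b₂ k) := hsort₂ (by exact_mod_cast Nat.lt_succ_iff.mp (Nat.lt_succ_of_le (Nat.succ_le_succ_iff.mp hle)))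
  exact this.trans hkA
end
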